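/- (Purification Bound, initialization) Let l be a branch. If l has at least one unused feature, then for every policy π, V^π(l) ≤ max{ H(l), −λ + n(l)/n }; in particular V*(l) ≤ max{ H(l), −λ + n(l)/n }. If l has no unused feature (splits(l) = q), then V^π(l) = H(l) for every policy π. -/

import Mathlib

open Finset

/-- A branch: for each feature, either unused (`none`) or fixed to a category. -/
abbrev Branch (q : ℕ) (C : Fin q → ℕ) : Type := ∀ i : Fin q, Option (Fin (C i))

/-- States: `Sum.inl l` is the (non-terminal) branch `l`, `Sum.inr l` is its terminal state `l̄`. -/
abbrev BState (q : ℕ) (C : Fin q → ℕ) : Type := Branch q C ⊕ Branch q C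

/-- The root branch `Ω`. -/
def root (q : ℕ) (C : Fin q → ℕ) : Branch q C := fun _ => none

/-- The child of `l` obtained by fixing unused feature `i` to category `j`. -/
def child {q : ℕ} {C : Fin q → ℕ} (l : Branch q C) (i : Fin q) (j : Fin (C i)) : Branch q C :=
  Function.update l i (some j)

/-- `Children(l, i)`. -/
def childrenF {q : ℕ} {C : Fin q → ℕ} (l : Branch q C) (i : Fin q) : Finset (Branch q C) :=
  Finset.univ.image (fun j : Fin (C i) => child l i j)

/-- A policy: `act l = none` is the terminal action `ā`, `act l = some i` splits on the
unused feature `i`. -/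
structure Policy (q : ℕ) (C : Fin q → ℕ) where
  act : Branch q C → Option (Fin q)
  valid : ∀ l i, act l = some i → l i = none

/-- Transition set of the action taken by `π` at branch `l`. -/
def stepSet {q : ℕ} {C : Fin q → ℕ} (π : Policy q C) (l : Branch q C) : Finset (BState q C) :=
  match π.act l with
  | none => {Sum.inr l}
  | some i => (childrenF l i).image Sum.inl

/-- Trajectory of policy `π` from branch `l`. -/
def traj {q : ℕ} {C : Fin q → ℕ} (π : Policy q C) (l : Branch q C) : ℕ → Finset (BState q C)
  | 0 => {Sum.inl l}
  | t + 1 => (traj π l t).biUnion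
      (fun s => Sum.elim (fun lu => stepSet π lu) (fun lu => ({Sum.inr lu} : Finset (BState q C))) s)

/-- `τ_l^π`: minimal time `t ≥ 1` at which the trajectory consists of terminal states only. -/
noncomputable def tau {q : ℕ} {C : Fin q → ℕ} (π : Policy q C) (l : Branch q C) : ℕ :=
  sInf {t : ℕ | 1 ≤ t ∧ ∀ x ∈ traj π l t, x.isRight}

/-- A data point `x` is in branch `l`. -/
def inBranch {q : ℕ} {C : Fin q → ℕ} (l : Branch q C) (x : ∀ i : Fin q, Fin (C i)) : Prop :=
  ∀ (i : Fin q) (c : Fin (C i)), l i = some c → x i = c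

instance {q : ℕ} {C : Fin q → ℕ} (l : Branch q C) (x : ∀ i, Fin (C i)) :
    Decidable (inBranch l x) := by unfold inBranch; infer_instance

/-- `n(l)`: number of data points in `l`. -/
def nIn {q K : ℕ} {C : Fin q → ℕ} (D : Multiset ((∀ i : Fin q, Fin (C i)) × Fin K))
    (l : Branch q C) : ℕ :=
  (D.filter (fun p => inBranch l p.1)).card

/-- `n_k(l)`: number of data points in `l` of class `k`. -/
def nk {q K : ℕ} {C : Fin q → ℕ} (D : Multiset ((∀ i : Fin q, Fin (C i)) × Fin K))
    (l : Branch q C) (k : Fin K) : ℕ :=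
  (D.filter (fun p => inBranch l p.1 ∧ p.2 = k)).card

/-- `H(l) = (max_k n_k(l)) / n`. -/
noncomputable def Hb {q K : ℕ} {C : Fin q → ℕ} (D : Multiset ((∀ i : Fin q, Fin (C i)) × Fin K))
    (l : Branch q C) : ℝ :=
  ((Finset.univ.sup (fun k : Fin K => nk D l k) : ℕ) : ℝ) / (Multiset.card D : ℝ)

/-- Reward collected at a state of the trajectory: `H(l)` for the terminal action,
`-λ` for a split action, `0` at terminal states. -/
noncomputable def rew {q K : ℕ} {C : Fin q → ℕ}
    (D : Multiset ((∀ i : Fin q, Fin (C i)) × Fin K)) (lam : ℝ) (π : Policy q C) :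
    BState q C → ℝ
  | Sum.inl lu => match π.act lu with
      | none => Hb D lu
      | some _ => -lam
  | Sum.inr _ => 0

/-- Value `V^π(l)`. -/
noncomputable def V {q K : ℕ} {C : Fin q → ℕ}
    (D : Multiset ((∀ i : Fin q, Fin (C i)) × Fin K)) (lam : ℝ)
    (π : Policy q C) (l : Branch q C) : ℝ :=
  ∑ t ∈ Finset.range (tau π l), ∑ x ∈ traj π l t, rew D lam π x

/-- State-action value `Q^π(l, a)`. -/
noncomputable def Qv {q K : ℕ} {C : Fin q → ℕ}
    (D : Multiset ((∀ i : Fin q, Fin (C i)) × Fin K)) (lam : ℝ)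
    (π : Policy q C) (l : Branch q C) : Option (Fin q) → ℝ
  | none => Hb D l
  | some i => -lam + ∑ j : Fin (C i), V D lam π (child l i j)

/-- The available actions `A(l)`. -/
def Avail {q : ℕ} {C : Fin q → ℕ} (l : Branch q C) : Finset (Option (Fin q)) :=
  insert none ((Finset.univ.filter (fun i : Fin q => l i = none)).image some)

theorem Avail_nonempty {q : ℕ} {C : Fin q → ℕ} (l : Branch q C) : (Avail l).Nonempty :=
  ⟨none, Finset.mem_insert_self _ _⟩

/-- The sub-DT of `π` rooted in `l`: the branches whose terminal states constitute
the trajectory at time `τ_l^π`. -/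
noncomputable def subDTof {q : ℕ} {C : Fin q → ℕ} (π : Policy q C) (l : Branch q C) : Finset (Branch q C) :=
  (traj π l (tau π l)).image (Sum.elim id id)

/-- `SubDT l T m`: `T` is a sub-DT rooted in `l` obtained by `m` split operations. -/
inductive SubDT {q : ℕ} {C : Fin q → ℕ} : Branch q C → Finset (Branch q C) → ℕ → Prop
  | leaf (l : Branch q C) : SubDT l {l} 0
  | split (l : Branch q C) (T : Finset (Branch q C)) (m : ℕ) (l' : Branch q C) (i : Fin q)
      (hT : SubDT l T m) (hmem : l' ∈ T) (hnone : l' i = none) :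
      SubDT l (T.erase l' ∪ childrenF l' i) (m + 1)

/-- `H(T) = ∑_{l ∈ T} H(l)`. -/
noncomputable def HT {q K : ℕ} {C : Fin q → ℕ}
    (D : Multiset ((∀ i : Fin q, Fin (C i)) × Fin K)) (T : Finset (Branch q C)) : ℝ :=
  ∑ l ∈ T, Hb D l

/-- `splits(l)`: number of features used by branch `l`. -/
def nsplits {q : ℕ} {C : Fin q → ℕ} (l : Branch q C) : ℕ :=
  (Finset.univ.filter (fun i : Fin q => l i ≠ none)).card

section PBAux

variable {q K : ℕ} {C : Fin q → ℕ}

lemma child_apply_self (l : Branch q C) (i : Fin q) (j : Fin (C i)) :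
    child l i j i = some j := by simp [child]

lemma nsplits_child (l : Branch q C) (i : Fin q) (j : Fin (C i)) (h : l i = none) :
    nsplits (child l i j) = nsplits l + 1 := by
  unfold nsplits
  have hset : (Finset.univ.filter (fun i' => child l i j i' ≠ none))
      = insert i (Finset.univ.filter (fun i' : Fin q => l i' ≠ none)) := by
    ext i'
    simp only [Finset.mem_filter, Finset.mem_insert, Finset.mem_univ, true_and]
    by_cases hii : i' = i
    · subst hii; simp [child]
    · simp [child, Function.update_apply, hii, h]
  rw [hset, Finset.card_insert_of_notMem (by simp [h])]

lemma nsplits_le (l : Branch q C) : nsplits l ≤ q := by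
  unfold nsplits
  simpa using Finset.card_filter_le Finset.univ (fun i : Fin q => l i ≠ none)

lemma nsplits_lt (l : Branch q C) (i : Fin q) (h : l i = none) : nsplits l < q := by
  unfold nsplits
  have : (Finset.univ.filter (fun i' : Fin q => l i' ≠ none)) ⊂ Finset.univ := by
    rw [Finset.ssubset_univ_iff]
    intro huniv
    have : i ∈ Finset.univ.filter (fun i' : Fin q => l i' ≠ none) := by
      rw [huniv]; exact Finset.mem_univ i
    simp [h] at this
  simpa using Finset.card_lt_card this

lemma traj_zero (π : Policy q C) (l : Branch q C) : traj π l 0 = {Sum.inl l} := rfl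

lemma traj_succ (π : Policy q C) (l : Branch q C) (t : ℕ) :
    traj π l (t + 1) = (traj π l t).biUnion
      (fun s => Sum.elim (fun lu => stepSet π lu)
        (fun lu => ({Sum.inr lu} : Finset (BState q C))) s) := rfl

lemma traj_extends (π : Policy q C) (l : Branch q C) (t : ℕ) :
    ∀ s ∈ traj π l t, ∀ (i : Fin q) (c : Fin (C i)),
      l i = some c → Sum.elim id id s i = some c := by
  induction t with
  | zero =>
    intro s hs i c hc
    rw [traj_zero, Finset.mem_singleton] at hs
    subst hs; simpa using hc
  | succ t ih =>
    intro s hs i c hc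
    rw [traj_succ, Finset.mem_biUnion] at hs
    obtain ⟨u, hu, hs⟩ := hs
    cases u with
    | inl lu =>
      have hext := ih _ hu i c hc
      simp only [Sum.elim_inl, id] at hext
      simp only [Sum.elim_inl] at hs
      unfold stepSet at hs
      cases hact : π.act lu with
      | none =>
        rw [hact] at hs
        simp only [Finset.mem_singleton] at hs
        subst hs; simpa using hext
      | some i' =>
        rw [hact] at hs
        simp only [childrenF, Finset.mem_image, Finset.mem_univ, true_and] at hs
        obtain ⟨lc, ⟨j, hj⟩, hs⟩ := hs
        subst hs; subst hj
        have hne : i ≠ i' := by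
          intro h; subst h
          rw [π.valid lu i hact] at hext
          exact (by cases hext)
        simpa [child, Function.update_apply, hne] using hext
    | inr lu =>
      have hext := ih _ hu i c hc
      simp only [Sum.elim_inr, Finset.mem_singleton] at hs
      subst hs; simpa using hext

lemma traj_nsplits (π : Policy q C) (l : Branch q C) (t : ℕ) :
    ∀ lu : Branch q C, Sum.inl lu ∈ traj π l t → nsplits lu = nsplits l + t := by
  induction t with
  | zero =>
    intro lu hlu
    rw [traj_zero, Finset.mem_singleton] at hlu
    injection hlu with hlu
    subst hlu; rfl
  | succ t ih =>
    intro lu hlu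
    rw [traj_succ, Finset.mem_biUnion] at hlu
    obtain ⟨u, hu, hs⟩ := hlu
    cases u with
    | inl lv =>
      simp only [Sum.elim_inl] at hs
      unfold stepSet at hs
      cases hact : π.act lv with
      | none => rw [hact] at hs; simp at hs
      | some i =>
        rw [hact] at hs
        simp only [childrenF, Finset.mem_image, Finset.mem_univ, true_and] at hs
        obtain ⟨lc, ⟨j, hj⟩, hs⟩ := hs
        injection hs with hs
        subst hs; subst hj
        rw [nsplits_child lv i j (π.valid lv i hact), ih lv hu]
        omega
    | inr lv =>
      simp only [Sum.elim_inr, Finset.mem_singleton] at hs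
      exact absurd hs (by simp)

lemma traj_allRight (π : Policy q C) (l : Branch q C) :
    ∀ x ∈ traj π l (q + 1), x.isRight := by
  intro x hx
  cases x with
  | inl lu =>
    have h1 := traj_nsplits π l (q + 1) lu hx
    have h2 := nsplits_le lu
    omega
  | inr lu => rfl

lemma tau_mem (π : Policy q C) (l : Branch q C) :
    1 ≤ tau π l ∧ ∀ x ∈ traj π l (tau π l), x.isRight :=
  Nat.sInf_mem (⟨q + 1, by omega, traj_allRight π l⟩ :
    {t : ℕ | 1 ≤ t ∧ ∀ x ∈ traj π l t, x.isRight}.Nonempty)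

lemma tau_le (π : Policy q C) (l : Branch q C) {t : ℕ} (h1 : 1 ≤ t)
    (h : ∀ x ∈ traj π l t, x.isRight) : tau π l ≤ t :=
  Nat.sInf_le ⟨h1, h⟩

lemma traj_stable (π : Policy q C) (l : Branch q C) (t : ℕ)
    (h : ∀ x ∈ traj π l t, x.isRight) : traj π l (t + 1) = traj π l t := by
  rw [traj_succ]
  ext s
  rw [Finset.mem_biUnion]
  constructor
  · rintro ⟨u, hu, hs⟩
    cases u with
    | inl lu => exact absurd (h _ hu) (by simp)
    | inr lu =>
      simp only [Sum.elim_inr, Finset.mem_singleton] at hs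
      subst hs; exact hu
  · intro hs
    refine ⟨s, hs, ?_⟩
    cases s with
    | inl lu => exact absurd (h _ hs) (by simp)
    | inr lu => simp

lemma traj_allRight_of_ge (π : Policy q C) (l : Branch q C) (t : ℕ) (ht : tau π l ≤ t) :
    ∀ x ∈ traj π l t, x.isRight := by
  induction t, ht using Nat.le_induction with
  | base => exact (tau_mem π l).2
  | succ t ht ih => rw [traj_stable π l t ih]; exact ih

end PBAux

section PBValue

variable {q K : ℕ} {C : Fin q → ℕ}
variable (D : Multiset ((∀ i : Fin q, Fin (C i)) × Fin K)) (lam : ℝ)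

lemma sum_rew_zero (π : Policy q C) (l : Branch q C) (t : ℕ) (ht : tau π l ≤ t) :
    ∑ x ∈ traj π l t, rew D lam π x = 0 := by
  apply Finset.sum_eq_zero
  intro x hx
  have hR := traj_allRight_of_ge π l t ht x hx
  cases x with
  | inl lu => simp at hR
  | inr lu => rfl

lemma V_eq_sum (π : Policy q C) (l : Branch q C) (T : ℕ) (hT : tau π l ≤ T) :
    V D lam π l = ∑ t ∈ Finset.range T, ∑ x ∈ traj π l t, rew D lam π x := by
  induction T, hT using Nat.le_induction with
  | base => rfl
  | succ T hT ih =>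
    rw [Finset.sum_range_succ, ← ih, sum_rew_zero D lam π l T hT, add_zero]

lemma V_terminal (π : Policy q C) (l : Branch q C) (hact : π.act l = none) :
    V D lam π l = Hb D l := by
  have h1 : traj π l 1 = {Sum.inr l} := by
    rw [traj_succ, traj_zero]
    simp [stepSet, hact]
  have hle : tau π l ≤ 1 := tau_le π l le_rfl
    (by rw [h1]; intro x hx; rw [Finset.mem_singleton] at hx; subst hx; rfl)
  rw [V_eq_sum D lam π l 1 hle]
  simp [traj_zero, rew, hact]

lemma traj_split (π : Policy q C) (l : Branch q C) (i : Fin q)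
    (hact : π.act l = some i) (t : ℕ) :
    traj π l (t + 1)
      = (Finset.univ : Finset (Fin (C i))).biUnion (fun j => traj π (child l i j) t) := by
  induction t with
  | zero =>
    rw [traj_succ, traj_zero]
    ext s
    simp only [Finset.mem_biUnion, Finset.mem_singleton, Finset.mem_univ, true_and]
    constructor
    · rintro ⟨u, rfl, hs⟩
      simp only [Sum.elim_inl] at hs
      unfold stepSet at hs
      rw [hact] at hs
      simp only [childrenF, Finset.mem_image, Finset.mem_univ, true_and] at hs
      obtain ⟨lc, ⟨j, hj⟩, hs⟩ := hs
      refine ⟨j, ?_⟩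
      rw [traj_zero, Finset.mem_singleton, ← hs, hj]
    · rintro ⟨j, hj⟩
      rw [traj_zero, Finset.mem_singleton] at hj
      refine ⟨Sum.inl l, rfl, ?_⟩
      simp only [Sum.elim_inl]
      unfold stepSet
      rw [hact]
      simp only [childrenF, Finset.mem_image, Finset.mem_univ, true_and]
      exact ⟨child l i j, ⟨j, rfl⟩, hj.symm⟩
  | succ t ih =>
    rw [traj_succ, ih]
    ext s
    simp only [Finset.mem_biUnion, Finset.mem_univ, true_and, traj_succ]
    constructor
    · rintro ⟨u, ⟨j, hj⟩, hs⟩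
      exact ⟨j, ⟨u, hj, hs⟩⟩
    · rintro ⟨j, ⟨u, hu, hs⟩⟩
      exact ⟨u, ⟨j, hu⟩, hs⟩

lemma V_bellman (π : Policy q C) (l : Branch q C) (i : Fin q)
    (hact : π.act l = some i) :
    V D lam π l = -lam + ∑ j : Fin (C i), V D lam π (child l i j) := by
  have hdisj : ∀ (j : Fin (C i)) (t : ℕ) (s : BState q C), s ∈ traj π (child l i j) t →
      Sum.elim id id s i = some j := fun j t s hs =>
    traj_extends π (child l i j) t s hs i j (child_apply_self l i j)
  have hsum : ∀ t : ℕ, ∑ x ∈ traj π l (t + 1), rew D lam π x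
      = ∑ j : Fin (C i), ∑ x ∈ traj π (child l i j) t, rew D lam π x := by
    intro t
    have hpd : Set.PairwiseDisjoint
        ((Finset.univ : Finset (Fin (C i))) : Set (Fin (C i)))
        (fun j => traj π (child l i j) t) := by
      intro j _ j' _ hjj
      rw [Function.onFun, Finset.disjoint_left]
      intro s hs hs'
      have h1 := hdisj j t s hs
      have h2 := hdisj j' t s hs'
      rw [h1] at h2
      exact hjj (Option.some_injective _ h2)
    rw [traj_split π l i hact t, Finset.sum_biUnion hpd]
  have htl : tau π l ≤ q + 1 + 1 :=
    le_trans (tau_le π l (by omega) (traj_allRight π l)) (by omega)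
  rw [V_eq_sum D lam π l (q + 1 + 1) htl, Finset.sum_range_succ' _ (q + 1)]
  have h0 : ∑ x ∈ traj π l 0, rew D lam π x = -lam := by
    simp [traj_zero, rew, hact]
  rw [h0, Finset.sum_congr rfl (fun t _ => hsum t), Finset.sum_comm]
  have hch : ∀ j ∈ (Finset.univ : Finset (Fin (C i))),
      (∑ t ∈ Finset.range (q + 1), ∑ x ∈ traj π (child l i j) t, rew D lam π x)
        = V D lam π (child l i j) := fun j _ =>
    (V_eq_sum D lam π (child l i j) (q + 1) (tau_le π _ (by omega) (traj_allRight π _))).symm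
  rw [Finset.sum_congr rfl hch]
  ring

lemma inBranch_child (l : Branch q C) (i : Fin q) (h : l i = none) (j : Fin (C i))
    (x : ∀ i : Fin q, Fin (C i)) :
    inBranch (child l i j) x ↔ inBranch l x ∧ x i = j := by
  constructor
  · intro hx
    refine ⟨fun i' c hc => ?_, hx i j (child_apply_self l i j)⟩
    apply hx i' c
    by_cases hii : i' = i
    · subst hii; rw [h] at hc; exact (by cases hc)
    · rw [child, Function.update_of_ne hii]
      exact hc
  · rintro ⟨hx, hxi⟩
    intro i' c hc
    by_cases hii : i' = i
    · subst hii
      rw [child_apply_self l i' j] at hc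
      injection hc with hc
      rw [hxi, hc]
    · rw [child, Function.update_of_ne hii] at hc
      exact hx i' c hc

lemma nIn_children (l : Branch q C) (i : Fin q) (h : l i = none) :
    ∑ j : Fin (C i), nIn D (child l i j) = nIn D l := by
  induction D using Multiset.induction with
  | empty => simp [nIn]
  | cons a s ih =>
    have hc : ∀ l' : Branch q C, nIn (a ::ₘ s) l'
        = (if inBranch l' a.1 then 1 else 0) + nIn s l' := by
      intro l'
      unfold nIn
      rw [Multiset.filter_cons]
      by_cases hb : inBranch l' a.1 <;> simp [hb] <;> omega
    simp only [hc]
    rw [Finset.sum_add_distrib, ih]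
    congr 1
    have heq : ∀ j : Fin (C i), (if inBranch (child l i j) a.1 then 1 else 0)
        = (if inBranch l a.1 ∧ a.1 i = j then 1 else 0) := by
      intro j
      simp [inBranch_child l i h j]
    rw [Finset.sum_congr rfl (fun j _ => heq j)]
    by_cases hb : inBranch l a.1 <;> simp [hb, Finset.sum_ite_eq]

lemma nk_le_nIn (l : Branch q C) (k : Fin K) : nk D l k ≤ nIn D l := by
  unfold nk nIn
  apply Multiset.card_le_card
  apply Multiset.monotone_filter_right
  intro p hp
  exact hp.1

lemma Hb_le (hD : D ≠ 0) (l : Branch q C) :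
    Hb D l ≤ (nIn D l : ℝ) / (Multiset.card D : ℝ) := by
  have hn : (0:ℝ) < (Multiset.card D : ℝ) := by
    exact_mod_cast Multiset.card_pos.mpr hD
  unfold Hb
  gcongr
  exact_mod_cast Finset.sup_le (fun k _ => nk_le_nIn D l k)

lemma V_le_aux (hD : D ≠ 0) (hlam0 : 0 < lam) (π : Policy q C) :
    ∀ (m : ℕ) (l : Branch q C), q - nsplits l ≤ m →
      V D lam π l ≤ (nIn D l : ℝ) / (Multiset.card D : ℝ) := by
  have hn : (0:ℝ) < (Multiset.card D : ℝ) := by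
    exact_mod_cast Multiset.card_pos.mpr hD
  intro m
  induction m with
  | zero =>
    intro l hm
    cases hact : π.act l with
    | none => rw [V_terminal D lam π l hact]; exact Hb_le D hD l
    | some i =>
      exact absurd (nsplits_lt l i (π.valid l i hact)) (by omega)
  | succ m ih =>
    intro l hm
    cases hact : π.act l with
    | none => rw [V_terminal D lam π l hact]; exact Hb_le D hD l
    | some i =>
      have hnone := π.valid l i hact
      rw [V_bellman D lam π l i hact]
      have hch : ∀ j : Fin (C i), V D lam π (child l i j)
          ≤ (nIn D (child l i j) : ℝ) / (Multiset.card D : ℝ) := by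
        intro j
        apply ih
        have := nsplits_child l i j hnone
        omega
      have h1 : (∑ j : Fin (C i), V D lam π (child l i j))
          ≤ ∑ j : Fin (C i), (nIn D (child l i j) : ℝ) / (Multiset.card D : ℝ) :=
        Finset.sum_le_sum (fun j _ => hch j)
      have h2 : (∑ j : Fin (C i), (nIn D (child l i j) : ℝ) / (Multiset.card D : ℝ))
          = (nIn D l : ℝ) / (Multiset.card D : ℝ) := by
        rw [← Finset.sum_div, ← Nat.cast_sum, nIn_children D l i hnone]
      have h3 : (0:ℝ) ≤ (nIn D l : ℝ) / (Multiset.card D : ℝ) := by positivity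
      rw [h2] at h1
      linarith

lemma V_split_le (hD : D ≠ 0) (hlam0 : 0 < lam) (π : Policy q C)
    (l : Branch q C) (i : Fin q) (hact : π.act l = some i) :
    V D lam π l ≤ -lam + (nIn D l : ℝ) / (Multiset.card D : ℝ) := by
  have hnone := π.valid l i hact
  rw [V_bellman D lam π l i hact]
  have h1 : (∑ j : Fin (C i), V D lam π (child l i j))
      ≤ ∑ j : Fin (C i), (nIn D (child l i j) : ℝ) / (Multiset.card D : ℝ) :=
    Finset.sum_le_sum (fun j _ => V_le_aux D lam hD hlam0 π q (child l i j) (by omega))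
  have h2 : (∑ j : Fin (C i), (nIn D (child l i j) : ℝ) / (Multiset.card D : ℝ))
      = (nIn D l : ℝ) / (Multiset.card D : ℝ) := by
    rw [← Finset.sum_div, ← Nat.cast_sum, nIn_children D l i hnone]
  rw [h2] at h1
  linarith

end PBValue

/-- **Purification Bound, initialization.** If `l` has an unused feature,
then for every policy `π`, `V^π(l) ≤ max { H(l), -λ + n(l)/n }` (in particular this
bounds `V*(l)`); if `l` has no unused feature, `V^π(l) = H(l)` for every policy. -/
theorem purification_bound_init {q K : ℕ} (hq : 2 ≤ q) (hK : 2 ≤ K)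
    {C : Fin q → ℕ} (hC : ∀ i, 2 ≤ C i)
    (D : Multiset ((∀ i : Fin q, Fin (C i)) × Fin K)) (hD : D ≠ 0)
    (lam : ℝ) (hlam0 : 0 < lam) (hlam1 : lam < 1)
    (l : Branch q C) :
    ((∃ i : Fin q, l i = none) → ∀ π : Policy q C,
        V D lam π l ≤ max (Hb D l) (-lam + (nIn D l : ℝ) / (Multiset.card D : ℝ))) ∧
    ((∀ i : Fin q, l i ≠ none) → ∀ π : Policy q C, V D lam π l = Hb D l) := by
  constructor
  · rintro ⟨i0, hi0⟩ π
    cases hact : π.act l with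
    | none =>
      rw [V_terminal D lam π l hact]
      exact le_max_left _ _
    | some i =>
      exact le_trans (V_split_le D lam hD hlam0 π l i hact) (le_max_right _ _)
  · intro hfull π
    cases hact : π.act l with
    | none => exact V_terminal D lam π l hact
    | some i => exact absurd (π.valid l i hact) (hfull i)
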